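/- Fix a prime ℓ and a partition μ of n. Define integers b_{i,j}(μ) for i ≥ 0, j ≥ 1 by the base-ℓ expansions μ_j − μ_{j+1} = Σ_{i≥0} b_{i,j}(μ)·ℓ^i with 0 ≤ b_{i,j}(μ) < ℓ. Then there is a unique ν ∈ Part(n,ℓ) and unique ℓ-regular partitions λ^(ℓ^i) of m_{ℓ^i}(ν) such that m_j(λ^(ℓ^i)) = b_{i,j}(μ) for all i, j; moreover μ = Σ_{i≥0} ℓ^i·(λ^(ℓ^i))ᵗ. -/

import Mathlib

/-- A function `f : ℕ → ℕ` is a partition of `m` if it is weakly decreasing,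
has finite support, and its parts sum to `m`.  Here `f i` is the `(i+1)`-st part
`λ_{i+1}` of the partition. -/
def IsPartition (m : ℕ) (f : ℕ → ℕ) : Prop :=
  Antitone f ∧ (Function.support f).Finite ∧ ∑ᶠ i, f i = m

/-- The transpose partition: `ptranspose f j` is the `(j+1)`-st part `(fᵗ)_{j+1}`
of the transpose, i.e. the number of indices `i` with `f i ≥ j + 1`. -/
noncomputable def ptranspose (f : ℕ → ℕ) : ℕ → ℕ :=
  fun j => {i : ℕ | j + 1 ≤ f i}.ncard

/-- `pmult f j` is the multiplicity `m_j(f)` of `j ≥ 1` as a part of `f`. -/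
noncomputable def pmult (f : ℕ → ℕ) (j : ℕ) : ℕ :=
  {i : ℕ | f i = j}.ncard

/-- All (nonzero) parts of `f` are powers of `ℓ`. -/
def PartsPowersOf (ℓ : ℕ) (f : ℕ → ℕ) : Prop :=
  ∀ i, f i ≠ 0 → ∃ k, f i = ℓ ^ k

/-- `f` is `ℓ`-regular: every part `j ≥ 1` has multiplicity `< ℓ`. -/
def IsRegularPartition (ℓ : ℕ) (f : ℕ → ℕ) : Prop :=
  ∀ j, 1 ≤ j → pmult f j < ℓ

/-- The combinatorial generalized Springer map: given a tuple `lam` where `lam i`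
is (meant to be) an `ℓ`-regular partition of `m_{ℓ^i}(ν)`, it returns the
partition `Σ_{i ≥ 0} ℓ^i · (lam i)ᵗ` (componentwise operations). -/
noncomputable def psiCo (ℓ : ℕ) (lam : ℕ → ℕ → ℕ) : ℕ → ℕ :=
  fun j => ∑ᶠ i, ℓ ^ i * ptranspose (lam i) j

lemma ncard_Iio (N : ℕ) : (Set.Iio N).ncard = N := by
  rw [← Finset.coe_range, Set.ncard_coe_finset, Finset.card_range]

lemma ncard_Ico (a b : ℕ) : (Set.Ico a b).ncard = b - a := by
  rw [← Finset.coe_Ico, Set.ncard_coe_finset, Nat.card_Ico]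

lemma part_lt_iff {f : ℕ → ℕ} (hf : Antitone f)
    (hfin : (Function.support f).Finite) (m i : ℕ) :
    m + 1 ≤ f i ↔ i < ptranspose f m := by
  have hne : {i | f i ≤ m}.Nonempty := by
    obtain ⟨B, hB⟩ := hfin.bddAbove
    refine ⟨B + 1, ?_⟩
    simp only [Set.mem_setOf_eq]
    by_contra h
    push_neg at h
    have hmem : B + 1 ∈ Function.support f := by
      rw [Function.mem_support]; omega
    have := hB hmem
    omega
  have hNmem : f (sInf {i | f i ≤ m}) ≤ m := Nat.sInf_mem hne
  have key : ∀ x : ℕ, m + 1 ≤ f x ↔ x < sInf {i | f i ≤ m} := by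
    intro x
    constructor
    · intro hx
      by_contra h
      push_neg at h
      have := hf h
      omega
    · intro hx
      by_contra h
      push_neg at h
      have : x ∈ {i | f i ≤ m} := by simp only [Set.mem_setOf_eq]; omega
      have := Nat.sInf_le this
      omega
  have hset : {i | m + 1 ≤ f i} = Set.Iio (sInf {i | f i ≤ m}) := by
    ext x
    simpa only [Set.mem_setOf_eq, Set.mem_Iio] using key x
  have hpt : ptranspose f m = sInf {i | f i ≤ m} := by
    rw [ptranspose, hset, ncard_Iio]
  rw [hpt]
  exact key i

lemma antitone_ptranspose {f : ℕ → ℕ} (hf : Antitone f)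
    (hfin : (Function.support f).Finite) : Antitone (ptranspose f) := by
  intro m m' hm
  rcases Nat.eq_zero_or_pos (ptranspose f m') with h | h
  · omega
  · have h1 : ptranspose f m' - 1 < ptranspose f m' := by omega
    have h2 : m' + 1 ≤ f (ptranspose f m' - 1) := (part_lt_iff hf hfin m' _).2 h1
    have h3 : m + 1 ≤ f (ptranspose f m' - 1) := by omega
    have := (part_lt_iff hf hfin m _).1 h3
    omega

lemma ptranspose_eq_zero {f : ℕ → ℕ} (hf : Antitone f)
    (hfin : (Function.support f).Finite) {m : ℕ} (hm : f 0 ≤ m) :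
    ptranspose f m = 0 := by
  by_contra h
  have h1 : 0 < ptranspose f m := Nat.pos_of_ne_zero h
  have := (part_lt_iff hf hfin m 0).2 h1
  omega

lemma support_ptranspose {f : ℕ → ℕ} (hf : Antitone f)
    (hfin : (Function.support f).Finite) :
    (Function.support (ptranspose f)).Finite := by
  apply Set.Finite.subset (Set.finite_Iio (f 0))
  intro m hm
  simp only [Set.mem_Iio]
  by_contra h
  exact hm (ptranspose_eq_zero hf hfin (by omega))

lemma ptranspose_ptranspose {f : ℕ → ℕ} (hf : Antitone f)
    (hfin : (Function.support f).Finite) :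
    ptranspose (ptranspose f) = f := by
  funext i
  have hset : {m | i + 1 ≤ ptranspose f m} = Set.Iio (f i) := by
    ext m
    simp only [Set.mem_setOf_eq, Set.mem_Iio]
    rw [show (i + 1 ≤ ptranspose f m) ↔ i < ptranspose f m from Iff.rfl,
      ← part_lt_iff hf hfin]
    omega
  rw [ptranspose, hset, ncard_Iio]

lemma pmult_eq_sub {f : ℕ → ℕ} (hf : Antitone f)
    (hfin : (Function.support f).Finite) {j : ℕ} (hj : 1 ≤ j) :
    pmult f j = ptranspose f (j - 1) - ptranspose f j := by
  have hset : {i | f i = j} = Set.Ico (ptranspose f j) (ptranspose f (j - 1)) := by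
    ext i
    simp only [Set.mem_setOf_eq, Set.mem_Ico]
    have h1 := part_lt_iff hf hfin (j - 1) i
    have h2 := part_lt_iff hf hfin j i
    omega
  rw [pmult, hset, ncard_Ico]

lemma desc_sum (u w : ℕ → ℕ) (K : ℕ) (h0 : ∀ j, K ≤ j → u j = 0)
    (hstep : ∀ j, u j = w (j + 1) + u (j + 1)) :
    ∀ j, u j = ∑ k ∈ Finset.Ioc j K, w k := by
  have main : ∀ d j, K ≤ j + d → u j = ∑ k ∈ Finset.Ioc j K, w k := by
    intro d
    induction d with
    | zero =>
      intro j hj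
      rw [h0 j (by omega), Finset.Ioc_eq_empty (by omega), Finset.sum_empty]
    | succ d ih =>
      intro j hj
      by_cases h : K ≤ j
      · rw [h0 j h, Finset.Ioc_eq_empty (by omega), Finset.sum_empty]
      · have hj1 : K ≤ (j + 1) + d := by omega
        have hins : Finset.Ioc j K = insert (j + 1) (Finset.Ioc (j + 1) K) := by
          rw [Finset.Ioc_insert_left (by omega : j + 1 ≤ K), Finset.Icc_add_one_left_eq_Ioc]
        rw [hins, Finset.sum_insert (by simp), ← ih _ hj1, ← hstep j]
  intro j
  exact main K j (by omega)

lemma Ioc_sum_step (w : ℕ → ℕ) (K : ℕ) (hw : ∀ k, K < k → w k = 0) (j : ℕ) :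
    ∑ k ∈ Finset.Ioc j K, w k = w (j + 1) + ∑ k ∈ Finset.Ioc (j + 1) K, w k := by
  by_cases h : j < K
  · rw [show Finset.Ioc j K = insert (j + 1) (Finset.Ioc (j + 1) K) from by
      rw [Finset.Ioc_insert_left (by omega), Finset.Icc_add_one_left_eq_Ioc],
      Finset.sum_insert (by simp)]
  · rw [Finset.Ioc_eq_empty (by omega), Finset.Ioc_eq_empty (by omega), hw (j + 1) (by omega)]
    simp

lemma finsum_ptranspose {f : ℕ → ℕ} (hf : Antitone f)
    (hfin : (Function.support f).Finite) :
    ∑ᶠ m, ptranspose f m = ∑ᶠ i, f i := by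
  obtain ⟨A', hA'⟩ := hfin.bddAbove
  set A := A' + 1 with hA
  have hfz : ∀ i, A ≤ i → f i = 0 := by
    intro i hi
    by_contra h
    have := hA' (Function.mem_support.2 h)
    omega
  set B := f 0 with hB
  have h1 : ∑ᶠ m, ptranspose f m = ∑ m ∈ Finset.range B, ptranspose f m := by
    apply finsum_eq_sum_of_support_subset
    intro m hm
    simp only [Finset.coe_range, Set.mem_Iio]
    by_contra h
    exact hm (ptranspose_eq_zero hf hfin (by omega))
  have h2 : ∑ᶠ i, f i = ∑ i ∈ Finset.range A, f i := by
    apply finsum_eq_sum_of_support_subset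
    intro i hi
    simp only [Finset.coe_range, Set.mem_Iio]
    by_contra h
    exact hi (hfz i (by omega))
  have h3 : ∀ m, ptranspose f m
      = ∑ i ∈ Finset.range A, (if m + 1 ≤ f i then 1 else 0) := by
    intro m
    rw [← Finset.card_filter, ptranspose]
    have hset : {i : ℕ | m + 1 ≤ f i}
        = ↑((Finset.range A).filter (fun i => m + 1 ≤ f i)) := by
      ext i
      simp only [Set.mem_setOf_eq, Finset.coe_filter, Finset.mem_range]
      constructor
      · intro hi
        refine ⟨?_, hi⟩
        by_contra h
        have := hfz i (by omega)
        omega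
      · tauto
    rw [hset, Set.ncard_coe_finset]
  rw [h1, h2]
  calc ∑ m ∈ Finset.range B, ptranspose f m
      = ∑ m ∈ Finset.range B, ∑ i ∈ Finset.range A, (if m + 1 ≤ f i then 1 else 0) :=
        Finset.sum_congr rfl fun m _ => h3 m
    _ = ∑ i ∈ Finset.range A, ∑ m ∈ Finset.range B, (if m + 1 ≤ f i then 1 else 0) :=
        Finset.sum_comm
    _ = ∑ i ∈ Finset.range A, f i := by
        apply Finset.sum_congr rfl
        intro i _
        rw [← Finset.card_filter]
        have hfiB : f i ≤ B := hf (Nat.zero_le i)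
        have hfe : (Finset.range B).filter (fun m => m + 1 ≤ f i)
            = Finset.range (f i) := by
          ext m
          simp only [Finset.mem_filter, Finset.mem_range]
          omega
        rw [hfe, Finset.card_range]

lemma ptranspose_succ_step {f : ℕ → ℕ} (hf : Antitone f)
    (hfin : (Function.support f).Finite) (j : ℕ) :
    ptranspose f j = pmult f (j + 1) + ptranspose f (j + 1) := by
  have h1 := pmult_eq_sub hf hfin (show 1 ≤ j + 1 by omega)
  rw [Nat.add_sub_cancel] at h1
  have h2 : ptranspose f (j + 1) ≤ ptranspose f j :=
    antitone_ptranspose hf hfin (by omega)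
  omega



/-- Fix a prime `ℓ` and a partition `μ` of `n`, and let `b i j` (for `j ≥ 1`)
be the base-`ℓ` digits of `μ_j − μ_{j+1}`, i.e. `μ_j − μ_{j+1} = Σ_i b i j·ℓ^i`
with `b i j < ℓ`.  Then there is a unique pair `(ν, lam)` with `ν ∈ Part(n,ℓ)`
and `lam i` an `ℓ`-regular partition of `m_{ℓ^i}(ν)` such that
`m_j(lam i) = b i j` for all `i, j`; moreover `μ = Σ_{i≥0} ℓ^i·(lam i)ᵗ`.
(Recall `μ_j = μ (j-1)` in our `0`-indexing.) -/
theorem unique_preimage_of_digits (ℓ n : ℕ) (hℓ : ℓ.Prime)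
    (μ : ℕ → ℕ) (hμ : IsPartition n μ) (b : ℕ → ℕ → ℕ)
    (hbfin : ∀ j, (Function.support fun i => b i j).Finite)
    (hblt : ∀ i j, b i j < ℓ)
    (hb : ∀ j, 1 ≤ j → μ (j - 1) = μ j + ∑ᶠ i, b i j * ℓ ^ i) :
    ∃! p : (ℕ → ℕ) × (ℕ → ℕ → ℕ),
      (IsPartition n p.1 ∧ PartsPowersOf ℓ p.1 ∧
        ∀ i, IsPartition (pmult p.1 (ℓ ^ i)) (p.2 i) ∧
          IsRegularPartition ℓ (p.2 i)) ∧
      (∀ i j, 1 ≤ j → pmult (p.2 i) j = b i j) ∧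
      psiCo ℓ p.2 = μ := by
  classical
  obtain ⟨hμa, hμf, hμs⟩ := hμ
  have hl2 : 2 ≤ ℓ := hℓ.two_le
  obtain ⟨B, hB⟩ := hμf.bddAbove
  set N := B + 1 with hNdef
  have hμN : ∀ j, N ≤ j → μ j = 0 := by
    intro j hj
    by_contra h
    have := hB (Function.mem_support.2 h)
    omega
  have hμle : ∀ j, μ j ≤ n := by
    intro j
    have := single_le_finsum j hμf (fun k => Nat.zero_le (μ k))
    omega
  have hbsup : ∀ j, (Function.support fun i => b i j * ℓ ^ i).Finite := by
    intro j
    apply (hbfin j).subset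
    intro i hi
    simp only [Function.mem_support] at hi ⊢
    intro h
    apply hi
    rw [h, zero_mul]
  have hbμ : ∀ i j, 1 ≤ j → b i j * ℓ ^ i ≤ μ (j - 1) := by
    intro i j hj
    have h1 : b i j * ℓ ^ i ≤ ∑ᶠ i, b i j * ℓ ^ i :=
      single_le_finsum (f := fun i => b i j * ℓ ^ i) i (hbsup j)
        (fun k => Nat.zero_le _)
    have h2 := hb j hj
    calc b i j * ℓ ^ i ≤ ∑ᶠ i, b i j * ℓ ^ i := h1
      _ ≤ μ (j - 1) := by omega
  have hbN : ∀ i j, N < j → b i j = 0 := by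
    intro i j hj
    have h1 := hbμ i j (by omega)
    have h2 := hμN (j - 1) (by omega)
    have h3 : 0 < ℓ ^ i := Nat.pow_pos (by omega)
    have h4 : b i j ≤ b i j * ℓ ^ i := Nat.le_mul_of_pos_right _ h3
    omega
  have hbn : ∀ i j, 1 ≤ j → n < i → b i j = 0 := by
    intro i j hj hi
    by_contra h
    have h1 : 1 * ℓ ^ i ≤ b i j * ℓ ^ i :=
      Nat.mul_le_mul_right _ (Nat.one_le_iff_ne_zero.2 h)
    rw [one_mul] at h1
    have h2 := hbμ i j hj
    have h3 := hμle (j - 1)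
    have h4 : i < 2 ^ i := Nat.lt_two_pow_self
    have h5 : 2 ^ i ≤ ℓ ^ i := Nat.pow_le_pow_left hl2 i
    omega
  set c : ℕ → ℕ → ℕ := fun i j => ∑ k ∈ Finset.Ioc j N, b i k with hcdef
  have hcstep : ∀ i j, c i j = b i (j + 1) + c i (j + 1) := fun i j =>
    Ioc_sum_step (b i) N (fun k hk => hbN i k hk) j
  have hcN : ∀ i j, N ≤ j → c i j = 0 := by
    intro i j hj
    simp only [hcdef]
    rw [Finset.Ioc_eq_empty (by omega), Finset.sum_empty]
  have hcanti : ∀ i, Antitone (c i) := by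
    intro i
    apply antitone_nat_of_succ_le
    intro j
    have := hcstep i j
    omega
  have hcfin : ∀ i, (Function.support (c i)).Finite := by
    intro i
    apply Set.Finite.subset (Set.finite_Iio N)
    intro j hj
    simp only [Set.mem_Iio]
    by_contra h
    exact hj (hcN i j (by omega))
  have hcz : ∀ i j, n < i → c i j = 0 := by
    intro i j hi
    simp only [hcdef]
    apply Finset.sum_eq_zero
    intro k hk
    simp only [Finset.mem_Ioc] at hk
    exact hbn i k (by omega) hi
  have hμstep : ∀ j, μ j = (∑ i ∈ Finset.range (n + 1), ℓ ^ i * b i (j + 1)) + μ (j + 1) := by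
    intro j
    have h := hb (j + 1) (by omega)
    rw [Nat.add_sub_cancel] at h
    have hfb : (∑ᶠ i, b i (j + 1) * ℓ ^ i)
        = ∑ i ∈ Finset.range (n + 1), ℓ ^ i * b i (j + 1) := by
      rw [finsum_eq_sum_of_support_subset]
      · exact Finset.sum_congr rfl fun i _ => mul_comm _ _
      · intro i hi
        simp only [Function.mem_support] at hi
        simp only [Finset.coe_range, Set.mem_Iio]
        by_contra hcon
        exact hi (by rw [hbn i (j + 1) (by omega) (by omega), zero_mul])
    rw [hfb] at h
    omega
  have hkey := desc_sum μ (fun k => ∑ i ∈ Finset.range (n + 1), ℓ ^ i * b i k) N hμN hμstep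
  have hμc : ∀ j, μ j = ∑ i ∈ Finset.range (n + 1), ℓ ^ i * c i j := by
    intro j
    rw [hkey j, Finset.sum_comm]
    exact Finset.sum_congr rfl fun i _ => (Finset.mul_sum _ _ _).symm
  set lam : ℕ → ℕ → ℕ := fun i => ptranspose (c i) with hlamdef
  set M : ℕ → ℕ := fun i => ∑ j ∈ Finset.range N, c i j with hMdef
  have hMz : ∀ i, n < i → M i = 0 := fun i hi =>
    Finset.sum_eq_zero fun j _ => hcz i j hi
  set mν : ℕ → ℕ := fun k => if ℓ ^ Nat.log ℓ k = k then M (Nat.log ℓ k) else 0 with hmdef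
  have hmpow : ∀ i, mν (ℓ ^ i) = M i := by
    intro i
    simp only [hmdef]
    rw [Nat.log_pow (by omega)]
    simp
  have hmbig : ∀ k, ℓ ^ n < k → mν k = 0 := by
    intro k hk
    simp only [hmdef]
    split_ifs with h
    · apply hMz
      by_contra hle
      push_neg at hle
      have : ℓ ^ Nat.log ℓ k ≤ ℓ ^ n := Nat.pow_le_pow_right (by omega) (by omega)
      omega
    · rfl
  set tν : ℕ → ℕ := fun j => ∑ k ∈ Finset.Ioc j (ℓ ^ n), mν k with htdef
  have htstep : ∀ j, tν j = mν (j + 1) + tν (j + 1) := fun j =>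
    Ioc_sum_step mν (ℓ ^ n) hmbig j
  have htanti : Antitone tν := antitone_nat_of_succ_le (fun j => by
    have := htstep j; omega)
  have htz : ∀ j, ℓ ^ n ≤ j → tν j = 0 := by
    intro j hj
    simp only [htdef]
    rw [Finset.Ioc_eq_empty (by omega), Finset.sum_empty]
  have htfin : (Function.support tν).Finite := by
    apply Set.Finite.subset (Set.finite_Iio (ℓ ^ n))
    intro j hj
    simp only [Set.mem_Iio]
    by_contra h
    exact hj (htz j (by omega))
  set ν : ℕ → ℕ := ptranspose tν with hνdef
  have hνanti : Antitone ν := antitone_ptranspose htanti htfin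
  have hνfin : (Function.support ν).Finite := support_ptranspose htanti htfin
  have hνt : ptranspose ν = tν := ptranspose_ptranspose htanti htfin
  have hνmult : ∀ k, 1 ≤ k → pmult ν k = mν k := by
    intro k hk
    rw [pmult_eq_sub hνanti hνfin hk, hνt]
    have h1 := htstep (k - 1)
    rw [show k - 1 + 1 = k by omega] at h1
    have h2 : tν k ≤ tν (k - 1) := htanti (by omega)
    omega
  have hlam_anti : ∀ i, Antitone (lam i) := fun i =>
    antitone_ptranspose (hcanti i) (hcfin i)
  have hlam_fin : ∀ i, (Function.support (lam i)).Finite := fun i =>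
    support_ptranspose (hcanti i) (hcfin i)
  have hlamt : ∀ i, ptranspose (lam i) = c i := fun i =>
    ptranspose_ptranspose (hcanti i) (hcfin i)
  have hlam_sum : ∀ i, ∑ᶠ r, lam i r = M i := by
    intro i
    simp only [hlamdef]
    rw [finsum_ptranspose (hcanti i) (hcfin i), hMdef]
    apply finsum_eq_sum_of_support_subset
    intro j hj
    simp only [Finset.coe_range, Set.mem_Iio]
    by_contra h
    exact hj (hcN i j (by omega))
  have hlam_mult : ∀ i j, 1 ≤ j → pmult (lam i) j = b i j := by
    intro i j hj
    rw [pmult_eq_sub (hlam_anti i) (hlam_fin i) hj, hlamt i]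
    have h1 := hcstep i (j - 1)
    rw [show j - 1 + 1 = j by omega] at h1
    have h2 : c i j ≤ c i (j - 1) := hcanti i (by omega)
    omega
  have htν_eq : ∀ j, tν j = ∑ i ∈ Finset.range (n + 1), (if j < ℓ ^ i then M i else 0) := by
    intro j
    have himg : ∑ k ∈ Finset.Ioc j (ℓ ^ n), mν k
        = ∑ k ∈ ((Finset.range (n + 1)).filter (fun i => j < ℓ ^ i)).image (fun i => ℓ ^ i),
            mν k := by
      symm
      apply Finset.sum_subset
      · intro k hk
        simp only [Finset.mem_image, Finset.mem_filter, Finset.mem_range] at hk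
        obtain ⟨i, ⟨hin, hji⟩, rfl⟩ := hk
        simp only [Finset.mem_Ioc]
        exact ⟨hji, Nat.pow_le_pow_right (by omega) (by omega)⟩
      · intro k hk hnk
        by_contra h
        simp only [hmdef] at h
        split_ifs at h with hp
        · have hlog : Nat.log ℓ k ≤ n := by
            by_contra hc
            push_neg at hc
            exact h (hMz _ hc)
          apply hnk
          simp only [Finset.mem_Ioc] at hk
          simp only [Finset.mem_image, Finset.mem_filter, Finset.mem_range]
          exact ⟨Nat.log ℓ k, ⟨by omega, by omega⟩, hp⟩
        · exact h rfl
    have hinj : ∀ x ∈ (Finset.range (n + 1)).filter (fun i => j < ℓ ^ i),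
        ∀ y ∈ (Finset.range (n + 1)).filter (fun i => j < ℓ ^ i),
        ℓ ^ x = ℓ ^ y → x = y := fun x _ y _ h =>
      Nat.pow_right_injective hl2 h
    have hMc : ∑ i ∈ (Finset.range (n + 1)).filter (fun i => j < ℓ ^ i), mν (ℓ ^ i)
        = ∑ i ∈ (Finset.range (n + 1)).filter (fun i => j < ℓ ^ i), M i :=
      Finset.sum_congr rfl fun i _ => hmpow i
    simp only [htdef]
    rw [himg, Finset.sum_image hinj, hMc, Finset.sum_filter]
  have hνsum : ∑ᶠ r, ν r = n := by
    simp only [hνdef]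
    rw [finsum_ptranspose htanti htfin]
    have hts : ∑ᶠ j, tν j = ∑ j ∈ Finset.range (ℓ ^ n), tν j := by
      apply finsum_eq_sum_of_support_subset
      intro j hj
      simp only [Finset.coe_range, Set.mem_Iio]
      by_contra h
      exact hj (htz j (by omega))
    rw [hts]
    calc ∑ j ∈ Finset.range (ℓ ^ n), tν j
        = ∑ j ∈ Finset.range (ℓ ^ n), ∑ i ∈ Finset.range (n + 1),
            (if j < ℓ ^ i then M i else 0) :=
          Finset.sum_congr rfl fun j _ => htν_eq j
      _ = ∑ i ∈ Finset.range (n + 1), ∑ j ∈ Finset.range (ℓ ^ n),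
            (if j < ℓ ^ i then M i else 0) := Finset.sum_comm
      _ = ∑ i ∈ Finset.range (n + 1), ℓ ^ i * M i := by
          apply Finset.sum_congr rfl
          intro i hi
          simp only [Finset.mem_range] at hi
          rw [← Finset.sum_filter]
          have hfe : (Finset.range (ℓ ^ n)).filter (fun j => j < ℓ ^ i)
              = Finset.range (ℓ ^ i) := by
            have hle : ℓ ^ i ≤ ℓ ^ n := Nat.pow_le_pow_right (by omega) (by omega)
            ext m
            simp only [Finset.mem_filter, Finset.mem_range]
            omega
          rw [hfe, Finset.sum_const, Finset.card_range, smul_eq_mul]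
      _ = ∑ i ∈ Finset.range (n + 1), ∑ j ∈ Finset.range N, ℓ ^ i * c i j := by
          apply Finset.sum_congr rfl
          intro i _
          simp only [hMdef]
          rw [Finset.mul_sum]
      _ = ∑ j ∈ Finset.range N, ∑ i ∈ Finset.range (n + 1), ℓ ^ i * c i j :=
          Finset.sum_comm
      _ = ∑ j ∈ Finset.range N, μ j :=
          Finset.sum_congr rfl fun j _ => (hμc j).symm
      _ = n := by
          rw [← hμs]
          symm
          apply finsum_eq_sum_of_support_subset
          intro j hj
          simp only [Finset.coe_range, Set.mem_Iio]
          by_contra h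
          exact hj (hμN j (by omega))
  have hνpow : PartsPowersOf ℓ ν := by
    intro r hr
    have hone : 1 ≤ ν r := Nat.pos_of_ne_zero hr
    have hfin' : {i : ℕ | ν i = ν r}.Finite := by
      apply hνfin.subset
      intro x hx
      simp only [Set.mem_setOf_eq] at hx
      simp only [Function.mem_support]
      omega
    have hpos : 0 < pmult ν (ν r) := by
      rw [pmult]
      exact (Set.ncard_pos hfin').2 ⟨r, rfl⟩
    rw [hνmult _ hone] at hpos
    simp only [hmdef] at hpos
    split_ifs at hpos with h
    · exact ⟨Nat.log ℓ (ν r), h.symm⟩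
    · omega
  refine ⟨(ν, lam), ⟨⟨⟨hνanti, hνfin, hνsum⟩, hνpow, ?_⟩, ?_, ?_⟩, ?_⟩
  · intro i
    refine ⟨⟨hlam_anti i, hlam_fin i, ?_⟩, ?_⟩
    · rw [hlam_sum i, hνmult (ℓ ^ i) (Nat.one_le_pow i ℓ (by omega)), hmpow]
    · intro j hj
      rw [hlam_mult i j hj]
      exact hblt i j
  · exact fun i j hj => hlam_mult i j hj
  · funext j
    show (∑ᶠ i, ℓ ^ i * ptranspose (lam i) j) = μ j
    have hcongr : (fun i => ℓ ^ i * ptranspose (lam i) j) = fun i => ℓ ^ i * c i j := by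
      funext i
      rw [hlamt i]
    rw [hcongr, hμc j]
    apply finsum_eq_sum_of_support_subset
    intro i hi
    simp only [Function.mem_support] at hi
    simp only [Finset.coe_range, Set.mem_Iio]
    by_contra h
    exact hi (by rw [hcz i j (by omega), mul_zero])
  · rintro ⟨ν', lam'⟩ ⟨⟨⟨hν'a, hν'f, hν's⟩, hν'pow, hlam'⟩, hmult', hpsi'⟩
    dsimp only at hν'a hν'f hν's hν'pow hlam' hmult' hpsi'
    have hlam'eq : lam' = lam := by
      funext i
      obtain ⟨⟨ha, hfn, hsum⟩, hreg⟩ := hlam' i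
      have hKz : ∀ j, max N (lam' i 0) ≤ j → ptranspose (lam' i) j = 0 := fun j hj =>
        ptranspose_eq_zero ha hfn (by omega)
      have hstep' : ∀ j, ptranspose (lam' i) j
          = b i (j + 1) + ptranspose (lam' i) (j + 1) := by
        intro j
        have h1 := ptranspose_succ_step ha hfn j
        rw [hmult' i (j + 1) (by omega)] at h1
        exact h1
      have hdesc := desc_sum _ (b i) (max N (lam' i 0)) hKz hstep'
      have ht'c : ptranspose (lam' i) = c i := by
        funext j
        rw [hdesc j]
        simp only [hcdef]
        symm
        apply Finset.sum_subset
        · exact Finset.Ioc_subset_Ioc_right (le_max_left _ _)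
        · intro k hk hnk
          simp only [Finset.mem_Ioc] at hk hnk
          exact hbN i k (by omega)
      calc lam' i = ptranspose (ptranspose (lam' i)) :=
            (ptranspose_ptranspose ha hfn).symm
        _ = ptranspose (c i) := by rw [ht'c]
        _ = lam i := rfl
    have hpm : ∀ k, 1 ≤ k → pmult ν' k = pmult ν k := by
      intro k hk
      by_cases h : ℓ ^ Nat.log ℓ k = k
      · obtain ⟨⟨_, _, hsum'⟩, _⟩ := hlam' (Nat.log ℓ k)
        rw [hlam'eq] at hsum'
        rw [← h, ← hsum', hlam_sum,
          hνmult _ (Nat.one_le_pow _ ℓ (by omega)), hmpow]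
      · have hz : ∀ g : ℕ → ℕ, PartsPowersOf ℓ g → pmult g k = 0 := by
          intro g hg
          have hempty : {i : ℕ | g i = k} = ∅ := by
            ext i
            simp only [Set.mem_setOf_eq, Set.mem_empty_iff_false, iff_false]
            intro hik
            have hne : g i ≠ 0 := by omega
            obtain ⟨m, hm⟩ := hg i hne
            rw [hik] at hm
            rw [hm, Nat.log_pow (by omega)] at h
            exact h rfl
          rw [pmult, hempty, Set.ncard_empty]
        rw [hz ν' hν'pow, hz ν hνpow]
    have h0' : ∀ j, max (ν' 0) (ν 0) ≤ j → ptranspose ν' j = 0 := fun j hj =>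
      ptranspose_eq_zero hν'a hν'f (by omega)
    have h0 : ∀ j, max (ν' 0) (ν 0) ≤ j → ptranspose ν j = 0 := fun j hj =>
      ptranspose_eq_zero hνanti hνfin (by omega)
    have hd1 := desc_sum _ (pmult ν') (max (ν' 0) (ν 0)) h0'
      (fun j => ptranspose_succ_step hν'a hν'f j)
    have hd2 := desc_sum _ (pmult ν) (max (ν' 0) (ν 0)) h0
      (fun j => ptranspose_succ_step hνanti hνfin j)
    have htr : ptranspose ν' = ptranspose ν := by
      funext j
      rw [hd1 j, hd2 j]
      apply Finset.sum_congr rfl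
      intro k hk
      simp only [Finset.mem_Ioc] at hk
      exact hpm k (by omega)
    have hν'ν : ν' = ν := by
      calc ν' = ptranspose (ptranspose ν') := (ptranspose_ptranspose hν'a hν'f).symm
        _ = ptranspose (ptranspose ν) := by rw [htr]
        _ = ν := ptranspose_ptranspose hνanti hνfin
    rw [Prod.mk.injEq]
    exact ⟨hν'ν, hlam'eq⟩
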